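/- Let M = ℤ^n with n ≥ 2, r > n − 2 a positive integer, a = e_1 + ... + e_{n−1} + r·e_n, and Q = Cone(e_1,...,e_{n−1}, a) ⊆ ℝ^n. Let u = (k−1)e_1 + a_1 where a_1 = e_1 + ... + e_n and k ≥ 1. Let m be the irrelevant maximal ideal of R = k[Q ∩ ℤ^n]. Then χ^u ∈ m^k but χ^u ∉ m^{k+1}. -/

import Mathlib

open Finset

noncomputable section

/-- Cast an integer vector to a real vector. -/
def castZ {n : ℕ} (u : Fin n → ℤ) : Fin n → ℝ := fun j => (u j : ℝ)

/-- Membership in the cone spanned by the vectors `w`. -/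
def inCone {n m : ℕ} (w : Fin m → (Fin n → ℝ)) (x : Fin n → ℝ) : Prop :=
  ∃ a : Fin m → ℝ, (∀ i, 0 ≤ a i) ∧ x = ∑ i, a i • w i

/-- The set of total weights of nonnegative representations of `x` in terms of `w`. -/
def weightSet {n m : ℕ} (w : Fin m → (Fin n → ℝ)) (x : Fin n → ℝ) : Set ℝ :=
  { t | ∃ a : Fin m → ℝ, (∀ i, 0 ≤ a i) ∧ x = ∑ i, a i • w i ∧ t = ∑ i, a i }

/-- The maximum weight function `W`. -/
def maxWeight {n m : ℕ} (w : Fin m → (Fin n → ℝ)) (x : Fin n → ℝ) : ℝ :=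
  sSup (weightSet w x)

/-- A lattice vector is primitive. -/
def Primitive {n : ℕ} (v : Fin n → ℤ) : Prop :=
  v ≠ 0 ∧ ∀ (z : ℤ) (q : Fin n → ℤ), 0 < z → v = z • q → z = 1

/-- Lattice points of the cone. -/
def latticeInCone {n m : ℕ} (w : Fin m → (Fin n → ℤ)) (u : Fin n → ℤ) : Prop :=
  inCone (fun i => castZ (w i)) (castZ u)

/-- `χ^u ∈ m_Q^k` : `u` is a sum of `k` nonzero lattice points of the cone plus a
lattice point of the cone. -/
def inPowM {n m : ℕ} (w : Fin m → (Fin n → ℤ)) (u : Fin n → ℤ) (k : ℕ) : Prop :=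
  ∃ v : Fin k → (Fin n → ℤ), (∀ i, latticeInCone w (v i) ∧ v i ≠ 0) ∧
    latticeInCone w (u - ∑ i, v i)

/-- `k_u` : the largest `k` such that `χ^u ∈ m_Q^k`. -/
def kU {n m : ℕ} (w : Fin m → (Fin n → ℤ)) (u : Fin n → ℤ) : ℕ :=
  sSup {k | inPowM w u k}

/-- Lattice points of the fundamental box `S_Q`. -/
def inBox {n m : ℕ} (w : Fin m → (Fin n → ℤ)) (u : Fin n → ℤ) : Prop :=
  ∃ a : Fin m → ℝ, (∀ i, 0 ≤ a i ∧ a i < 1) ∧ castZ u = ∑ i, a i • castZ (w i)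

/-- The constant `Γ_Q`. -/
def gammaQ {n m : ℕ} (w : Fin m → (Fin n → ℤ)) : ℝ :=
  sSup { x | ∃ u, inBox w u ∧
    x = maxWeight (fun i => castZ (w i)) (castZ u) - (kU w u : ℝ) }

end

/-- The ray generators of the cone `Q = Cone(e₁, ..., e_{n-1}, a)` from the sharpness
example, where `a = e₁ + ⋯ + e_{n−1} + r·eₙ`. -/
def exGens (n : ℕ) (r : ℕ) : Fin n → (Fin n → ℤ) :=
  fun i => if (i : ℕ) < n - 1 then Pi.single i 1
           else fun j => if (j : ℕ) = n - 1 then (r : ℤ) else 1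

/-- The lattice point `aᵢ = e₁ + ⋯ + e_{n−1} + i·eₙ`. -/
def exA (n : ℕ) (i : ℕ) : Fin n → ℤ := fun j => if (j : ℕ) = n - 1 then (i : ℤ) else 1

private lemma sum_eval {n r : ℕ} (hn : 2 ≤ n) (a : Fin n → ℝ) (j : Fin n) :
    (∑ i, a i • castZ (exGens n r i)) j =
      if (j : ℕ) = n - 1 then a ⟨n - 1, by omega⟩ * r
      else a j + a ⟨n - 1, by omega⟩ := by
  set L : Fin n := ⟨n - 1, by omega⟩ with hLdef
  rw [Finset.sum_apply]
  simp only [Pi.smul_apply, smul_eq_mul]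
  by_cases hj : (j : ℕ) = n - 1
  · have hjL : j = L := Fin.ext (by simp [hLdef, hj])
    rw [if_pos hj, Finset.sum_eq_single L]
    · have : ¬ ((L : ℕ) < n - 1) := by simp [hLdef]
      simp [exGens, castZ, this, hj, hjL, show (L : ℕ) = n - 1 from rfl]
    · intro i _ hiL
      have hi : (i : ℕ) < n - 1 := by
        have : (i : ℕ) ≠ n - 1 := fun h => hiL (Fin.ext (by simp [hLdef, h]))
        omega
      have hne : j ≠ i := fun h => hiL (by rw [← h, hjL])
      simp [exGens, castZ, hi, Pi.single_eq_of_ne hne]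
    · simp
  · rw [if_neg hj]
    have hjL : j ≠ L := fun h => hj (by simp [h, hLdef])
    have hz : ∀ i ∈ (Finset.univ : Finset (Fin n)), i ∉ ({j, L} : Finset (Fin n)) →
        a i * castZ (exGens n r i) j = 0 := by
      intro i _ hi
      simp only [Finset.mem_insert, Finset.mem_singleton, not_or] at hi
      have hilt : (i : ℕ) < n - 1 := by
        have : (i : ℕ) ≠ n - 1 := fun h => hi.2 (Fin.ext (by simp [hLdef, h]))
        omega
      have hne : j ≠ i := fun h => hi.1 h.symm
      simp [exGens, castZ, hilt, Pi.single_eq_of_ne hne]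
    rw [← Finset.sum_subset (Finset.subset_univ ({j, L} : Finset (Fin n))) hz,
      Finset.sum_pair hjL]
    have h1 : (j : ℕ) < n - 1 := by omega
    have h2 : ¬ ((L : ℕ) < n - 1) := by simp [hLdef]
    simp [exGens, castZ, h1, h2, hj]

private lemma cone_char {n r : ℕ} (hn : 2 ≤ n) (hr : 1 ≤ r) (p : Fin n → ℤ) :
    latticeInCone (exGens n r) p ↔
      (0 ≤ p ⟨n - 1, by omega⟩ ∧
        ∀ j : Fin n, (j : ℕ) ≠ n - 1 → p ⟨n - 1, by omega⟩ ≤ (r : ℤ) * p j) := by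
  set L : Fin n := ⟨n - 1, by omega⟩ with hLdef
  have hrR : (0 : ℝ) < (r : ℝ) := by exact_mod_cast hr
  constructor
  · rintro ⟨a, ha, heq⟩
    have hcoord : ∀ j : Fin n, (p j : ℝ) =
        if (j : ℕ) = n - 1 then a L * r else a j + a L := by
      intro j
      have := congrFun heq j
      rw [sum_eval hn a j] at this
      exact this
    have hL : (p L : ℝ) = a L * r := by
      have := hcoord L; simpa [hLdef] using this
    constructor
    · have : (0 : ℝ) ≤ (p L : ℝ) := by rw [hL]; exact mul_nonneg (ha L) hrR.le
      exact_mod_cast this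
    · intro j hj
      have hjv : (p j : ℝ) = a j + a L := by simpa [hj] using hcoord j
      have : (p L : ℝ) ≤ (r : ℝ) * (p j : ℝ) := by
        rw [hL, hjv]
        have := ha j
        nlinarith
      exact_mod_cast this
  · rintro ⟨h0, hj⟩
    refine ⟨fun i => if (i : ℕ) = n - 1 then (p L : ℝ) / r
      else (p i : ℝ) - (p L : ℝ) / r, fun i => ?_, ?_⟩
    · dsimp only
      by_cases hi : (i : ℕ) = n - 1
      · rw [if_pos hi]
        have : (0 : ℝ) ≤ (p L : ℝ) := by exact_mod_cast h0
        positivity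
      · rw [if_neg hi]
        have h1 : (p L : ℝ) ≤ (r : ℝ) * (p i : ℝ) := by exact_mod_cast hj i hi
        rw [sub_nonneg, div_le_iff₀ hrR]
        linarith
    · funext j
      rw [sum_eval hn]
      by_cases hjn : (j : ℕ) = n - 1
      · have hjL : j = L := Fin.ext (by simp [hLdef, hjn])
        rw [if_pos hjn]
        have : ((L : ℕ) = n - 1) := by simp [hLdef]
        rw [if_pos this]
        field_simp [castZ, hjL]
        simp [castZ, hjL]
      · rw [if_neg hjn]
        have hLn : ((L : ℕ) = n - 1) := by simp [hLdef]
        rw [if_neg hjn, if_pos hLn]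
        simp [castZ]


private lemma nonneg_aux {r a b : ℤ} (hr : 1 ≤ r) (h0 : 0 ≤ b) (h : b ≤ r * a) : 0 ≤ a := by
  nlinarith

private lemma pos_aux {r a : ℤ} (hr : 1 ≤ r) (h : 1 ≤ r * a) : 1 ≤ a := by
  nlinarith

private lemma G_cases {n r : ℕ} (hn : 2 ≤ n) (hr : 1 ≤ r) (p : Fin n → ℤ)
    (h0 : 0 ≤ p ⟨n - 1, by omega⟩)
    (hj : ∀ j : Fin n, (j : ℕ) ≠ n - 1 → p ⟨n - 1, by omega⟩ ≤ (r : ℤ) * p j)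
    (h1 : p ⟨n - 1, by omega⟩ ≤ 1) :
    (0 ≤ (∑ j, p j) - ((n : ℤ) - 1) * p ⟨n - 1, by omega⟩) ∧
      (p ≠ 0 → 1 ≤ (∑ j, p j) - ((n : ℤ) - 1) * p ⟨n - 1, by omega⟩) := by
  set L : Fin n := ⟨n - 1, by omega⟩ with hLdef
  have hr' : (1 : ℤ) ≤ (r : ℤ) := by exact_mod_cast hr
  have hnonneg : ∀ j, 0 ≤ p j := by
    intro j
    by_cases hjn : (j : ℕ) = n - 1
    · have : j = L := Fin.ext (by simp [hLdef, hjn])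
      rw [this]; exact h0
    · exact nonneg_aux hr' h0 (hj j hjn)
  rcases (by omega : p L = 0 ∨ p L = 1) with hPL | hPL
  · rw [hPL]
    have hs : (0:ℤ) ≤ ∑ j, p j := Finset.sum_nonneg (fun j _ => hnonneg j)
    refine ⟨by linarith, fun hne => ?_⟩
    obtain ⟨j0, hj0⟩ := Function.ne_iff.1 hne
    have hj0' : 1 ≤ p j0 := by
      have := hnonneg j0
      have : p j0 ≠ 0 := by simpa using hj0
      omega
    have : p j0 ≤ ∑ j, p j := Finset.single_le_sum (fun j _ => hnonneg j) (Finset.mem_univ j0)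
    simp only [mul_zero, sub_zero]
    linarith
  · rw [hPL]
    have hall : ∀ j ∈ Finset.univ.erase L, (1:ℤ) ≤ p j := by
      intro j hjmem
      have hjne : j ≠ L := (Finset.mem_erase.1 hjmem).1
      have hjn : (j : ℕ) ≠ n - 1 := fun h => hjne (Fin.ext (by simp [hLdef, h]))
      exact pos_aux hr' (by simpa [hPL] using hj j hjn)
    have hcard : (Finset.univ.erase L).card = n - 1 := by
      rw [Finset.card_erase_of_mem (Finset.mem_univ L)]
      simp
    have hsum1 : ((n : ℤ) - 1) ≤ ∑ j ∈ Finset.univ.erase L, p j := by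
      have := Finset.sum_le_sum hall
      rw [Finset.sum_const, hcard] at this
      have hcast : ((n - 1 : ℕ) : ℤ) = (n : ℤ) - 1 := by push_cast [hn]; omega
      simpa [nsmul_eq_mul, hcast] using this
    have hsplit : p L + ∑ j ∈ Finset.univ.erase L, p j = ∑ j, p j :=
      Finset.add_sum_erase Finset.univ p (Finset.mem_univ L)
    constructor
    · rw [hPL] at hsplit; linarith
    · intro _; rw [hPL] at hsplit; linarith


/-- In the cone `Q = Cone(e₁,...,e_{n−1}, a)` with
`a = e₁ + ⋯ + e_{n−1} + r·eₙ`, `r > n − 2`, the monomial `χ^u` with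
`u = (k−1)e₁ + a₁ = k·e₁ + e₂ + ⋯ + eₙ` lies in `m^k` but not in `m^{k+1}`. -/
theorem example_monomial_in_mk_not_mk1 (n r k : ℕ) (hn : 2 ≤ n) (hr : n - 2 < r)
    (hk : 1 ≤ k) :
    inPowM (exGens n r) (fun j => if (j : ℕ) = 0 then (k : ℤ) else 1) k ∧
    ¬ inPowM (exGens n r) (fun j => if (j : ℕ) = 0 then (k : ℤ) else 1) (k + 1) := by
  have hr1 : 1 ≤ r := by omega
  have hr1' : (1 : ℤ) ≤ (r : ℤ) := by exact_mod_cast hr1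
  set L : Fin n := ⟨n - 1, by omega⟩ with hLdef
  set u : Fin n → ℤ := (fun j => if (j : ℕ) = 0 then (k : ℤ) else 1) with hudef
  set z : Fin n := ⟨0, by omega⟩ with hzdef
  have hzL : (L : ℕ) ≠ 0 := by show n - 1 ≠ 0; omega
  have hLz : L ≠ z := fun h => hzL (by rw [h])
  -- the two building blocks
  have hone : latticeInCone (exGens n r) (fun _ => (1 : ℤ)) := by
    rw [cone_char hn hr1]
    exact ⟨by norm_num, fun j _ => by simpa using hr1'⟩
  have hsingle : latticeInCone (exGens n r) (Pi.single z 1) := by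
    rw [cone_char hn hr1]
    have h2 : (Pi.single z 1 : Fin n → ℤ) L = 0 := by rw [Pi.single_eq_of_ne hLz]
    constructor
    · rw [h2]
    · intro j hj
      have h1 : (0:ℤ) ≤ (Pi.single z 1 : Fin n → ℤ) j := by
        rcases eq_or_ne j z with h | h
        · rw [h, Pi.single_eq_same]; norm_num
        · rw [Pi.single_eq_of_ne h]
      rw [h2]
      positivity
  constructor
  · -- u ∈ m^k
    refine ⟨fun i => if (i : ℕ) = 0 then (fun _ => 1) else Pi.single z 1, fun i => ?_, ?_⟩
    · dsimp only
      by_cases hi : (i : ℕ) = 0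
      · rw [if_pos hi]
        refine ⟨hone, fun h => ?_⟩
        have := congrFun h z; simp at this
      · rw [if_neg hi]
        refine ⟨hsingle, fun h => ?_⟩
        have := congrFun h z; simp at this
    · have hsum : ∑ i : Fin k, (if (i : ℕ) = 0 then (fun _ => (1:ℤ)) else Pi.single z 1) = u := by
        funext j
        rw [Finset.sum_apply]
        by_cases hj : j = z
        · have hterm : ∀ i : Fin k,
              (if (i : ℕ) = 0 then (fun _ => (1:ℤ)) else Pi.single z 1) j = 1 := by
            intro i
            by_cases hi : (i : ℕ) = 0 <;> rw [hj] <;> simp [hi, Pi.single_eq_same]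
          rw [Finset.sum_congr rfl (fun i _ => hterm i)]
          simp [hudef, hj, hzdef]
        · have hterm : ∀ i : Fin k,
              (if (i : ℕ) = 0 then (fun _ => (1:ℤ)) else Pi.single z 1) j
                = if i = (⟨0, by omega⟩ : Fin k) then 1 else 0 := by
            intro i
            have hiff : ((i : ℕ) = 0) = (i = (⟨0, by omega⟩ : Fin k)) := by
              simp [Fin.ext_iff]
            by_cases hi : (i : ℕ) = 0
            · simp [hi, ← hiff]
            · simp [hi, ← hiff, Pi.single_eq_of_ne hj]
          rw [Finset.sum_congr rfl (fun i _ => hterm i), Finset.sum_ite_eq' Finset.univ]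
          have hj0 : (j : ℕ) ≠ 0 := fun h => hj (Fin.ext (by simp [hzdef, h]))
          simp [hudef, hj0]
      rw [hsum]
      simp only [sub_self]
      exact ⟨fun _ => 0, fun i => le_refl 0, by funext j; simp [castZ]⟩
  · -- u ∉ m^{k+1}
    rintro ⟨v, hv, hrem⟩
    set w : Fin n → ℤ := u - ∑ i, v i with hwdef
    have hvL : ∀ i, 0 ≤ v i L := fun i => ((cone_char hn hr1 _).1 (hv i).1).1
    have hvj : ∀ i, ∀ j : Fin n, (j : ℕ) ≠ n - 1 → v i L ≤ (r : ℤ) * v i j :=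
      fun i => ((cone_char hn hr1 _).1 (hv i).1).2
    have hwL : 0 ≤ w L := ((cone_char hn hr1 _).1 hrem).1
    have hwj : ∀ j : Fin n, (j : ℕ) ≠ n - 1 → w L ≤ (r : ℤ) * w j :=
      ((cone_char hn hr1 _).1 hrem).2
    have hsplit : ∀ j, u j = (∑ i, v i j) + w j := by
      intro j
      simp [hwdef, Finset.sum_apply]
    have huL : u L = 1 := by simp [hudef, hzL]
    have hLsum : (∑ i, v i L) + w L = 1 := by rw [← hsplit L, huL]
    have hvL1 : ∀ i, v i L ≤ 1 := by
      intro i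
      have h1 : v i L ≤ ∑ i, v i L :=
        Finset.single_le_sum (fun i _ => hvL i) (Finset.mem_univ i)
      linarith
    have hwL1 : w L ≤ 1 := by
      have h1 : (0:ℤ) ≤ ∑ i, v i L := Finset.sum_nonneg (fun i _ => hvL i)
      linarith
    -- G values
    have hGv : ∀ i, 1 ≤ (∑ j, v i j) - ((n : ℤ) - 1) * v i L := fun i =>
      (G_cases hn hr1 (v i) (hvL i) (hvj i) (hvL1 i)).2 (hv i).2
    have hGw : 0 ≤ (∑ j, w j) - ((n : ℤ) - 1) * w L :=
      (G_cases hn hr1 w hwL hwj hwL1).1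
    -- G u = k
    have husum : ∑ j, u j = (k : ℤ) - 1 + n := by
      have hterm : ∀ j : Fin n, u j = (if j = z then (k:ℤ) - 1 else 0) + 1 := by
        intro j
        by_cases hj : j = z
        · have : (j : ℕ) = 0 := by rw [hj]
          simp [hudef, this, hj, show (z : ℕ) = 0 from rfl]
        · have hj0 : (j : ℕ) ≠ 0 := fun h => hj (Fin.ext (by simp [hzdef, h]))
          simp [hudef, hj0, hj]
      rw [Finset.sum_congr rfl (fun j _ => hterm j), Finset.sum_add_distrib,
        Finset.sum_ite_eq' Finset.univ, Finset.sum_const]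
      simp
    -- additivity
    have h1 : ∑ j, u j = (∑ i, ∑ j, v i j) + ∑ j, w j := by
      rw [Finset.sum_congr rfl (fun j _ => hsplit j), Finset.sum_add_distrib,
        Finset.sum_comm]
    have h2 : (k : ℤ) = (∑ i, ((∑ j, v i j) - ((n : ℤ) - 1) * v i L))
        + ((∑ j, w j) - ((n : ℤ) - 1) * w L) := by
      rw [Finset.sum_sub_distrib, ← Finset.mul_sum]
      have := h1
      rw [husum] at this
      have hLs := hLsum
      push_cast
      nlinarith [this, hLs]
    have h3 : (k : ℤ) + 1 ≤ ∑ i, ((∑ j, v i j) - ((n : ℤ) - 1) * v i L) := by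
      have := Finset.sum_le_sum (fun i (_ : i ∈ Finset.univ) => hGv i)
      calc (k : ℤ) + 1 = ∑ _i : Fin (k+1), (1:ℤ) := by simp
        _ ≤ _ := by
          refine Finset.sum_le_sum (fun i _ => hGv i)
    linarith [h2, h3, hGw]
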